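/- Let G be a finite group, n an integer divisible by |G|, and M a kG-module. Then the multiplication map n·id_M : M → M factors through a weakly injective kG-module; consequently, for any integer r coprime to n, the map r·id_M becomes an isomorphism in the stable module category (i.e., is invertible modulo maps factoring through weakly injective modules). -/

import Mathlib

open Finset

universe u

section Prelude

variable {k G : Type u} [CommRing k] [Group G] [Fintype G]
variable {M N : Type u} [AddCommGroup M] [Module k M] [AddCommGroup N] [Module k N]

/-- The trace map `Tr_G(θ)(m) = ∑ g, g • θ(g⁻¹ • m)`. -/
noncomputable def traceMap (ρM : Representation k G M) (ρN : Representation k G N)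
    (θ : M →ₗ[k] N) : M →ₗ[k] N :=
  ∑ g : G, (ρN g) ∘ₗ θ ∘ₗ (ρM g⁻¹)

/-- `f` is a `kG`-module homomorphism, i.e. a `G`-equivariant `k`-linear map. -/
def IsGEquiv (ρM : Representation k G M) (ρN : Representation k G N)
    (f : M →ₗ[k] N) : Prop :=
  ∀ g : G, f ∘ₗ (ρM g) = (ρN g) ∘ₗ f

/-- The induced module `M↑G = kG ⊗ₖ M`, modelled as `G →₀ M`, where `h • (g ⊗ m) = hg ⊗ m`. -/
noncomputable def ind (k G M : Type u) [CommRing k] [Group G] [AddCommGroup M] [Module k M] :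
    Representation k G (G →₀ M) where
  toFun h := Finsupp.lmapDomain M k (fun x => h * x)
  map_one' := by
    refine LinearMap.ext fun f => ?_
    show Finsupp.mapDomain (fun x => (1:G) * x) f = f
    simp only [one_mul]
    exact Finsupp.mapDomain_id
  map_mul' h₁ h₂ := by
    refine LinearMap.ext fun f => ?_
    simp only [Finsupp.lmapDomain_apply, Module.End.mul_apply]
    rw [show (fun x => h₁ * h₂ * x) = (fun x => h₁ * x) ∘ (fun x => h₂ * x) by
      funext x; simp [mul_assoc]]
    exact Finsupp.mapDomain_comp

/-- The natural map `ι_M : M → M↑G`, `m ↦ ∑ g, g ⊗ g⁻¹m`. -/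
noncomputable def indI (ρM : Representation k G M) : M →ₗ[k] (G →₀ M) :=
  ∑ g : G, (Finsupp.lsingle g) ∘ₗ (ρM g⁻¹)

/-- The natural map `π_M : M↑G → M`, `g ⊗ m ↦ g·m`. -/
noncomputable def indP (ρM : Representation k G M) : (G →₀ M) →ₗ[k] M :=
  Finsupp.lsum k fun g => (ρM g : M →ₗ[k] M)

end Prelude

section WeakDefs

variable {k G : Type u} [CommRing k] [Group G] [Fintype G]

/-- A `kG`-module `P` is weakly projective if every `kG`-homomorphism out of `P`
lifts along any `k`-split epimorphism of `kG`-modules. -/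
def WeaklyProjective {P : Type u} [AddCommGroup P] [Module k P]
    (ρP : Representation k G P) : Prop :=
  ∀ (M N : Type u) [AddCommGroup M] [Module k M] [AddCommGroup N] [Module k N]
    (ρM : Representation k G M) (ρN : Representation k G N) (π : M →ₗ[k] N),
    IsGEquiv ρM ρN π → (∃ s : N →ₗ[k] M, π ∘ₗ s = LinearMap.id) →
    ∀ f : P →ₗ[k] N, IsGEquiv ρP ρN f →
      ∃ fl : P →ₗ[k] M, IsGEquiv ρP ρM fl ∧ π ∘ₗ fl = f

/-- A `kG`-module `P` is weakly injective if every `kG`-homomorphism into `P`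
extends along any `k`-split monomorphism of `kG`-modules. -/
def WeaklyInjective {P : Type u} [AddCommGroup P] [Module k P]
    (ρP : Representation k G P) : Prop :=
  ∀ (L M : Type u) [AddCommGroup L] [Module k L] [AddCommGroup M] [Module k M]
    (ρL : Representation k G L) (ρM : Representation k G M) (ι : L →ₗ[k] M),
    IsGEquiv ρL ρM ι → (∃ r : M →ₗ[k] L, r ∘ₗ ι = LinearMap.id) →
    ∀ f : L →ₗ[k] P, IsGEquiv ρL ρP f →
      ∃ fe : M →ₗ[k] P, IsGEquiv ρM ρP fe ∧ fe ∘ₗ ι = f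

end WeakDefs

/-- `f : M → N` factors through a weakly injective `kG`-module. -/
def FactorsThroughWeaklyInjective
    {k G : Type u} [CommRing k] [Group G] [Fintype G]
    {M N : Type u} [AddCommGroup M] [Module k M] [AddCommGroup N] [Module k N]
    (ρM : Representation k G M) (ρN : Representation k G N) (f : M →ₗ[k] N) : Prop :=
  ∃ (W : Rep k G) (p : M →ₗ[k] W) (q : W →ₗ[k] N),
    WeaklyInjective W.ρ ∧ IsGEquiv ρM W.ρ p ∧ IsGEquiv W.ρ ρN q ∧ q ∘ₗ p = f

section Aux

variable {k G : Type u} [CommRing k] [Group G] [Fintype G]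
variable {L M : Type u} [AddCommGroup L] [Module k L] [AddCommGroup M] [Module k M]

/-- The adjunction map `Hom_k(L, M) → Hom_kG(L, Ind M)`. -/
noncomputable def toInd (ρL : Representation k G L) (ψ : L →ₗ[k] M) :
    L →ₗ[k] (G →₀ M) :=
  ∑ g : G, (Finsupp.lsingle g) ∘ₗ ψ ∘ₗ (ρL g⁻¹)

lemma toInd_apply (ρL : Representation k G L) (ψ : L →ₗ[k] M) (l : L) :
    toInd ρL ψ l = ∑ g : G, Finsupp.single g (ψ (ρL g⁻¹ l)) := by
  simp [toInd, LinearMap.sum_apply]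

lemma ind_single (g h : G) (m : M) :
    ind k G M g (Finsupp.single h m) = Finsupp.single (g * h) m := by
  simp [ind, Finsupp.mapDomain_single]

lemma toInd_equiv (ρL : Representation k G L) (ψ : L →ₗ[k] M) :
    IsGEquiv ρL (ind k G M) (toInd ρL ψ) := by
  intro g
  refine LinearMap.ext fun l => ?_
  simp only [LinearMap.comp_apply, toInd_apply, map_sum, ind_single]
  refine Fintype.sum_equiv (Equiv.mulLeft g⁻¹) _ _ fun x => ?_
  simp only [Equiv.coe_mulLeft, mul_inv_cancel_left]
  congr 1
  rw [mul_inv_rev, inv_inv, ← Module.End.mul_apply, ← map_mul]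

lemma sum_single_eq (x : G →₀ M) : ∑ g : G, Finsupp.single g (x g) = x := by
  ext a
  rw [Finsupp.finset_sum_apply]
  rw [Finset.sum_eq_single a (fun b _ hb => Finsupp.single_eq_of_ne' hb)
    (fun h => absurd (Finset.mem_univ a) h)]
  exact Finsupp.single_eq_same

lemma toInd_ev (ρL : Representation k G L) (f : L →ₗ[k] (G →₀ M))
    (hf : IsGEquiv ρL (ind k G M) f) :
    toInd ρL ((Finsupp.lapply (1 : G)) ∘ₗ f) = f := by
  refine LinearMap.ext fun l => ?_
  rw [toInd_apply]
  have : ∀ g : G, ((Finsupp.lapply (1 : G)) ∘ₗ f) (ρL g⁻¹ l) = (f l) g := by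
    intro g
    have := congrArg (fun φ => φ l) (hf g⁻¹)
    simp only [LinearMap.comp_apply] at this ⊢
    rw [this]
    show (Finsupp.mapDomain (fun x => g⁻¹ * x) (f l)) 1 = (f l) g
    have hinj : Function.Injective (fun x : G => g⁻¹ * x) := fun a b h => by
      simpa using h
    have : (1 : G) = (fun x : G => g⁻¹ * x) g := by simp
    rw [this, Finsupp.mapDomain_apply hinj]
  simp only [this]
  exact sum_single_eq (f l)

/-- Induced modules are weakly injective. -/
lemma ind_weaklyInjective : WeaklyInjective (k := k) (ind k G M) := by
  intro L' M' _ _ _ _ ρL ρM' ι hι ⟨r, hr⟩ f hf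
  refine ⟨toInd ρM' ((Finsupp.lapply (1 : G)) ∘ₗ f ∘ₗ r), toInd_equiv _ _, ?_⟩
  refine LinearMap.ext fun l => ?_
  have key : ∀ g : G, r (ρM' g⁻¹ (ι l)) = ρL g⁻¹ l := by
    intro g
    have := congrArg (fun φ => φ l) (hι g⁻¹)
    simp only [LinearMap.comp_apply] at this
    rw [← this]
    exact congrArg (fun φ => φ (ρL g⁻¹ l)) hr
  simp only [LinearMap.comp_apply, toInd_apply, key]
  have := congrArg (fun φ => φ l) (toInd_ev ρL f hf)
  simpa [toInd_apply] using this

lemma indP_equiv (ρM : Representation k G M) :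
    IsGEquiv (ind k G M) ρM (indP ρM) := by
  intro g
  refine Finsupp.lhom_ext fun h m => ?_
  simp only [LinearMap.comp_apply, ind_single]
  simp [indP, map_mul]

lemma IsGEquiv.zsmul {L M : Type u} [AddCommGroup L] [Module k L] [AddCommGroup M] [Module k M]
    {ρL : Representation k G L} {ρM : Representation k G M} {f : L →ₗ[k] M}
    (h : IsGEquiv ρL ρM f) (z : ℤ) : IsGEquiv ρL ρM (z • f) := by
  intro g
  refine LinearMap.ext fun m => ?_
  have hh := congrArg (fun φ => φ m) (h g)
  simp only [LinearMap.comp_apply] at hh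
  simp only [LinearMap.comp_apply, LinearMap.smul_apply, hh, map_zsmul]

end Aux

/-- if `|G|` divides `n`, then `n·id_M` factors through a weakly injective
module; consequently, for `r` coprime to `n`, the map `r·id_M` is invertible modulo maps
factoring through weakly injective modules. -/
theorem nsmul_id_factors_and_coprime_invertible
    {k G : Type u} [CommRing k] [Group G] [Fintype G]
    {M : Type u} [AddCommGroup M] [Module k M] (ρM : Representation k G M)
    (n : ℤ) (hn : (Fintype.card G : ℤ) ∣ n) :
    FactorsThroughWeaklyInjective ρM ρM (n • (LinearMap.id : M →ₗ[k] M)) ∧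
    ∀ r : ℤ, IsCoprime r n →
      ∃ σ : M →ₗ[k] M, IsGEquiv ρM ρM σ ∧
        FactorsThroughWeaklyInjective ρM ρM
          (r • σ - (LinearMap.id : M →ₗ[k] M)) := by
  obtain ⟨c, hc⟩ := hn
  -- the factorization of `n • id` through the induced module
  have hindI : indI ρM = toInd ρM (LinearMap.id) := by
    simp [indI, toInd]
  have key : ∀ z : ℤ, FactorsThroughWeaklyInjective ρM ρM (z • (n • (LinearMap.id : M →ₗ[k] M))) := by
    intro z
    refine ⟨Rep.of (ind k G M), (c • indI ρM : M →ₗ[k] (G →₀ M)),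
      (z • indP ρM : (G →₀ M) →ₗ[k] M), ind_weaklyInjective, ?_, ?_, ?_⟩
    · rw [Rep.of_ρ]
      exact IsGEquiv.zsmul (hindI ▸ toInd_equiv ρM (LinearMap.id)) c
    · rw [Rep.of_ρ]
      exact IsGEquiv.zsmul (indP_equiv ρM) z
    · refine LinearMap.ext fun m => ?_
      have hsum : indP ρM (∑ g : G, Finsupp.single g (ρM g⁻¹ m)) = (Fintype.card G : ℤ) • m := by
        rw [map_sum]
        have h1 : ∀ g : G, indP ρM (Finsupp.single g (ρM g⁻¹ m)) = m := by
          intro g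
          simp only [indP, Finsupp.lsum_single]
          rw [← Module.End.mul_apply, ← map_mul]
          simp
        simp only [h1, Finset.sum_const, Finset.card_univ, natCast_zsmul]
      have expand : (c • indI ρM) m = c • ∑ g : G, Finsupp.single g (ρM g⁻¹ m) := by
        rw [LinearMap.smul_apply, hindI, toInd_apply]
        simp
      calc ((z • indP ρM) ∘ₗ (c • indI ρM)) m
          = z • (indP ρM) ((c • indI ρM) m) := by
            simp only [LinearMap.comp_apply, LinearMap.smul_apply]
        _ = z • c • (indP ρM) (∑ g : G, Finsupp.single g (ρM g⁻¹ m)) := by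
            rw [expand, map_zsmul]
        _ = z • c • (Fintype.card G : ℤ) • m := by rw [hsum]
        _ = (z • n • (LinearMap.id : M →ₗ[k] M)) m := by
            simp only [LinearMap.smul_apply, LinearMap.id_apply, smul_smul, hc]
            ring_nf
  constructor
  · simpa using key 1
  · rintro r ⟨a, b, hab⟩
    refine ⟨a • LinearMap.id, ?_, ?_⟩
    · intro g
      refine LinearMap.ext fun m => ?_
      simp [map_zsmul]
    · have heq : r • (a • (LinearMap.id : M →ₗ[k] M)) - LinearMap.id
          = (-b) • (n • (LinearMap.id : M →ₗ[k] M)) := by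
        refine LinearMap.ext fun m => ?_
        simp only [LinearMap.sub_apply, LinearMap.smul_apply, LinearMap.id_apply]
        rw [smul_smul, smul_smul]
        have h1 : (r * a) • m - m = (r * a - 1) • m := by rw [sub_smul, one_smul]
        rw [h1]
        congr 1
        linear_combination hab
      rw [heq]
      exact key (-b)
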